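/- The two-dimensional rigid representation: let R be a commutative ring with an invertible element t^{1/2}, set t = (t^{1/2})² and q^{1/2} = −t⁻¹. Then the 2×2 matrices X = [[0, t⁻¹],[1, 0]], Y = [[t^{1/2}, 0],[0, −t^{1/2}]], T = t^{1/2}·I₂ over R satisfy: (T − t^{1/2}I)(T + t^{−1/2}I) = 0, T X T = X⁻¹, T⁻¹ Y T⁻¹ = Y⁻¹, and q^{1/2}·Y⁻¹X⁻¹YXT² = I₂; moreover Y² = X⁻² = t·I₂ and Y⁻¹X⁻¹YX = −I₂. -/

import Mathlib

theorem smul_one_fin_two {R : Type*} [CommRing R] (r : R) :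
    r • (1 : Matrix (Fin 2) (Fin 2) R) = !![r, 0; 0, r] := by
  ext i j
  fin_cases i <;> fin_cases j <;> simp [Matrix.one_apply]

/-- The two-dimensional rigid representation: over a commutative ring `R` with an
invertible `t^{1/2}`, `t = (t^{1/2})²`, `q^{1/2} = −t⁻¹`, the matrices
`X = [[0, t⁻¹],[1, 0]]`, `Y = diag(t^{1/2}, −t^{1/2})`, `T = t^{1/2}·I₂` satisfy
the type `A₁` DAHA relations, and moreover `Y² = X⁻² = t·I₂`,
`Y⁻¹X⁻¹YX = −I₂`. -/
theorem stmt8 (R : Type*) [CommRing R] (t2 : Rˣ)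
    (X Y T : Matrix (Fin 2) (Fin 2) R)
    (hX : X = !![0, ((t2⁻¹ : Rˣ) : R) ^ 2; 1, 0])
    (hY : Y = !![(t2 : R), 0; 0, -(t2 : R)])
    (hT : T = (t2 : R) • (1 : Matrix (Fin 2) (Fin 2) R)) :
    (T - (t2 : R) • (1 : Matrix (Fin 2) (Fin 2) R)) *
        (T + ((t2⁻¹ : Rˣ) : R) • (1 : Matrix (Fin 2) (Fin 2) R)) = 0 ∧
    T * X * T = X⁻¹ ∧
    T⁻¹ * Y * T⁻¹ = Y⁻¹ ∧
    (-(((t2⁻¹ : Rˣ) : R) ^ 2)) • (Y⁻¹ * X⁻¹ * Y * X * T ^ 2) = 1 ∧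
    Y ^ 2 = ((t2 : R) ^ 2) • (1 : Matrix (Fin 2) (Fin 2) R) ∧
    (X⁻¹) ^ 2 = ((t2 : R) ^ 2) • (1 : Matrix (Fin 2) (Fin 2) R) ∧
    Y⁻¹ * X⁻¹ * Y * X = -1 := by
  have hXinv : X⁻¹ = !![0, 1; ((t2 : R)) ^ 2, 0] := by
    apply Matrix.inv_eq_right_inv
    rw [hX, Matrix.mul_fin_two]
    ext i j
    fin_cases i <;> fin_cases j
    all_goals simp [Matrix.one_apply]
    all_goals (ring_nf; simp [← mul_pow])
  have hYinv : Y⁻¹ = !![((t2⁻¹ : Rˣ) : R), 0; 0, -((t2⁻¹ : Rˣ) : R)] := by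
    apply Matrix.inv_eq_right_inv
    rw [hY, Matrix.mul_fin_two]
    ext i j
    fin_cases i <;> fin_cases j
    all_goals simp [Matrix.one_apply]
    all_goals (ring_nf; simp [← Units.val_pow_eq_pow_val, ← Units.val_mul])
  have hTinv : T⁻¹ = !![((t2⁻¹ : Rˣ) : R), 0; 0, ((t2⁻¹ : Rˣ) : R)] := by
    apply Matrix.inv_eq_right_inv
    rw [hT, smul_one_fin_two, Matrix.mul_fin_two]
    ext i j
    fin_cases i <;> fin_cases j
    all_goals simp [Matrix.one_apply]
    all_goals (ring_nf; simp [← Units.val_pow_eq_pow_val, ← Units.val_mul])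
  rw [hXinv, hYinv, hTinv, hX, hY, hT, smul_one_fin_two]
  refine ⟨?_, ?_, ?_, ?_, ?_, ?_, ?_⟩
  all_goals simp only [pow_two, Matrix.mul_fin_two, smul_one_fin_two]
  all_goals ext i j
  all_goals fin_cases i <;> fin_cases j
  all_goals simp [Matrix.one_apply, Matrix.smul_apply, Matrix.sub_apply, Matrix.add_apply,
      Matrix.neg_apply, smul_eq_mul]
  all_goals (ring_nf; simp [← mul_pow])
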